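/- Let $f: \mathbb{R}^N \to \mathbb{R}$ be nonnegative with $(1+|v|^2)f \in L^1(\mathbb{R}^N)$, and define $n = \int f\,dv$, $u = \frac{1}{n}\int v f\,dv$, $T = \frac{m}{Nn}\int |v-u|^2 f\,dv$ (assuming $n > 0$). If $N_0(f) = \sup_v f(v) < \infty$, then there is a constant $C$ depending only on $N$ and $m$ such that $n/T^{N/2} \le C\, N_0(f)$. -/

import Mathlib

open MeasureTheory

set_option maxHeartbeats 1000000 in
/-- Estimate (i.1): `n / T^(N/2) ≤ C N₀(f)` with `C` depending only on `N` and `m`. -/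
theorem stmt_0 (N : ℕ) (hN : 1 ≤ N) (m : ℝ) (hm : 0 < m) :
    ∃ C : ℝ, ∀ (f : EuclideanSpace ℝ (Fin N) → ℝ) (n T N0 : ℝ)
      (u : EuclideanSpace ℝ (Fin N)),
      (∀ v, 0 ≤ f v) →
      Integrable (fun v => (1 + ‖v‖ ^ 2) * f v) →
      n = ∫ v, f v →
      0 < n →
      u = n⁻¹ • ∫ v, f v • v →
      T = m / (N * n) * ∫ v, ‖v - u‖ ^ 2 * f v →
      BddAbove (Set.range f) →
      N0 = ⨆ v, f v →
      n / T ^ ((N : ℝ) / 2) ≤ C * N0 := by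
  set ω : ℝ := (volume (Metric.ball (0 : EuclideanSpace ℝ (Fin N)) 1)).toReal with hω
  have hωnn : 0 ≤ ω := ENNReal.toReal_nonneg
  refine ⟨2 * ω * (2 * N / m) ^ ((N : ℝ) / 2), ?_⟩
  intro f n T N0 u hf hint hn hnpos hu hT hbdd hN0
  have hNpos : (0 : ℝ) < N := by exact_mod_cast hN
  have hfle : ∀ v, f v ≤ N0 := by
    intro v; rw [hN0]; exact le_ciSup hbdd v
  have hN0nn : 0 ≤ N0 := le_trans (hf u) (hfle u)
  have hCnn : 0 ≤ 2 * ω * (2 * N / m) ^ ((N : ℝ) / 2) := by positivity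
  -- measurability of f
  have hone : ∀ v : EuclideanSpace ℝ (Fin N), (0:ℝ) < 1 + ‖v‖ ^ 2 := by
    intro v; positivity
  have hmeas : AEStronglyMeasurable f volume := by
    have h1 : AEStronglyMeasurable
        (fun v : EuclideanSpace ℝ (Fin N) => (1 + ‖v‖ ^ 2)⁻¹ * ((1 + ‖v‖ ^ 2) * f v)) volume := by
      have hc : Continuous fun v : EuclideanSpace ℝ (Fin N) => (1 + ‖v‖ ^ 2)⁻¹ :=
        (continuous_const.add ((continuous_norm).pow 2)).inv₀ fun v => (hone v).ne'
      exact hc.aestronglyMeasurable.mul hint.aestronglyMeasurable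
    have : (fun v : EuclideanSpace ℝ (Fin N) => (1 + ‖v‖ ^ 2)⁻¹ * ((1 + ‖v‖ ^ 2) * f v)) = f := by
      funext v
      field_simp
    rwa [this] at h1
  -- integrability of f
  have hfint : Integrable f := by
    refine hint.mono hmeas (ae_of_all _ fun v => ?_)
    have h1 : (0:ℝ) ≤ f v := hf v
    have h2 : (0:ℝ) ≤ ‖v‖ ^ 2 := sq_nonneg _
    simp only [Real.norm_eq_abs, abs_of_nonneg h1, abs_of_nonneg (by nlinarith : (0:ℝ) ≤ (1 + ‖v‖^2) * f v)]
    nlinarith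
  -- integrability of the second moment
  have hφint : Integrable (fun v => ‖v - u‖ ^ 2 * f v) := by
    have hc : Continuous fun v : EuclideanSpace ℝ (Fin N) => ‖v - u‖ ^ 2 :=
      ((continuous_id.sub continuous_const).norm).pow 2
    refine (hint.const_mul (2 * (1 + ‖u‖ ^ 2))).mono
      (hc.aestronglyMeasurable.mul hmeas) (ae_of_all _ fun v => ?_)
    have h1 : (0:ℝ) ≤ f v := hf v
    have h2 : ‖v - u‖ ≤ ‖v‖ + ‖u‖ := norm_sub_le _ _
    have h3 : (0:ℝ) ≤ ‖v - u‖ := norm_nonneg _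
    have h4 : (0:ℝ) ≤ ‖v‖ := norm_nonneg _
    have h5 : (0:ℝ) ≤ ‖u‖ := norm_nonneg _
    have hb : ‖v - u‖ ^ 2 * f v ≤ 2 * (1 + ‖u‖ ^ 2) * ((1 + ‖v‖ ^ 2) * f v) := by
      have h6 : ‖v - u‖ ^ 2 ≤ (‖v‖ + ‖u‖) ^ 2 := by nlinarith
      have : ‖v - u‖ ^ 2 ≤ 2 * (1 + ‖u‖ ^ 2) * (1 + ‖v‖ ^ 2) := by
        nlinarith [sq_nonneg (‖v‖ - ‖u‖), sq_nonneg (‖v‖ * ‖u‖)]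
      nlinarith
    simp only [Real.norm_eq_abs]
    rw [abs_of_nonneg (by positivity), abs_of_nonneg (by nlinarith : (0:ℝ) ≤ 2 * (1 + ‖u‖^2) * ((1 + ‖v‖^2) * f v))]
    exact hb
  set I : ℝ := ∫ v, ‖v - u‖ ^ 2 * f v with hI
  have hInn : 0 ≤ I := integral_nonneg fun v => mul_nonneg (by positivity) (hf v)
  have hTnn : 0 ≤ T :=
    hT ▸ mul_nonneg (div_nonneg hm.le (mul_nonneg hNpos.le hnpos.le)) hInn
  rcases eq_or_lt_of_le hTnn with hT0 | hTpos
  · rw [← hT0, Real.zero_rpow (div_pos hNpos two_pos).ne', div_zero]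
    exact mul_nonneg hCnn hN0nn
  -- main case : T > 0
  have hIeq : I = N * n * T / m := by
    rw [hT]; field_simp
  set R : ℝ := Real.sqrt (2 * N * T / m) with hR
  have hR2 : R ^ 2 = 2 * N * T / m := Real.sq_sqrt (by positivity)
  have hRpos : 0 < R := Real.sqrt_pos.mpr (by positivity)
  set B : Set (EuclideanSpace ℝ (Fin N)) := Metric.closedBall u R with hB
  have hBmeas : MeasurableSet B := measurableSet_closedBall
  have hsplit : (∫ v in B, f v) + (∫ v in Bᶜ, f v) = ∫ v, f v :=
    integral_add_compl hBmeas hfint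
  -- volume of the ball
  have hvol : (volume B).toReal = R ^ N * ω := by
    rw [hB, Measure.addHaar_closedBall volume u hRpos.le]
    simp only [finrank_euclideanSpace, Fintype.card_fin]
    rw [ENNReal.toReal_mul, ENNReal.toReal_ofReal (by positivity)]
  -- bound inside the ball
  have hbound1 : (∫ v in B, f v) ≤ N0 * (R ^ N * ω) := by
    calc (∫ v in B, f v) ≤ ∫ _ in B, N0 := by
          refine setIntegral_mono_on hfint.integrableOn ((integrableOn_const_iff enorm_ne_top).mpr ?_)
            hBmeas fun v _ => hfle v
          exact Or.inr (measure_closedBall_lt_top)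
      _ = (volume B).toReal * N0 := by rw [setIntegral_const]; simp; exact Or.inl rfl
      _ = N0 * (R ^ N * ω) := by rw [hvol]; ring
  -- bound outside the ball
  have hbound2 : (∫ v in Bᶜ, f v) ≤ R⁻¹ ^ 2 * I := by
    calc (∫ v in Bᶜ, f v) ≤ ∫ v in Bᶜ, R⁻¹ ^ 2 * (‖v - u‖ ^ 2 * f v) := by
          refine setIntegral_mono_on hfint.integrableOn
            ((hφint.const_mul _).integrableOn) hBmeas.compl fun v hv => ?_
          have hd : R < ‖v - u‖ := by
            have : ¬ v ∈ B := hv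
            simp only [hB, Metric.mem_closedBall, not_le, dist_eq_norm] at this
            exact this
          have h1 : R ^ 2 ≤ ‖v - u‖ ^ 2 := by nlinarith
          have h2 : 0 ≤ f v := hf v
          have h3 : R⁻¹ ^ 2 * R ^ 2 = 1 := by field_simp
          calc f v = R⁻¹ ^ 2 * (R ^ 2 * f v) := by rw [← mul_assoc, h3, one_mul]
            _ ≤ R⁻¹ ^ 2 * (‖v - u‖ ^ 2 * f v) :=
              mul_le_mul_of_nonneg_left (mul_le_mul_of_nonneg_right h1 h2) (by positivity)
      _ ≤ ∫ v, R⁻¹ ^ 2 * (‖v - u‖ ^ 2 * f v) := by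
          refine setIntegral_le_integral (hφint.const_mul _) (ae_of_all _ fun v => ?_)
          exact mul_nonneg (by positivity) (mul_nonneg (by positivity) (hf v))
      _ = R⁻¹ ^ 2 * I := integral_const_mul _ _
  have hRinv : R⁻¹ ^ 2 * I = n / 2 := by
    have : R⁻¹ ^ 2 = m / (2 * N * T) := by
      rw [inv_pow, hR2]
      field_simp
    rw [this, hIeq]
    field_simp
  have hmain : n ≤ N0 * (R ^ N * ω) + n / 2 := by
    have hneq : n = (∫ v in B, f v) + ∫ v in Bᶜ, f v := by rw [hn, ← hsplit]
    have hb2 : (∫ v in Bᶜ, f v) ≤ n / 2 := le_trans hbound2 hRinv.le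
    linarith [hbound1]
  have hhalf : n / 2 ≤ N0 * (R ^ N * ω) := by linarith
  -- express R^N via T
  have hRN : (R : ℝ) ^ N = (2 * N / m) ^ ((N : ℝ) / 2) * T ^ ((N : ℝ) / 2) := by
    have h1 : R = (2 * N * T / m) ^ ((1:ℝ)/2) := by
      rw [hR, Real.sqrt_eq_rpow]
    have h2 : (R : ℝ) ^ N = R ^ (N : ℝ) := (Real.rpow_natCast R N).symm
    rw [h2, h1, ← Real.rpow_mul (by positivity)]
    have h3 : 2 * N * T / m = (2 * N / m) * T := by ring
    rw [show (1:ℝ)/2 * (N:ℝ) = (N:ℝ)/2 by ring, h3,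
      Real.mul_rpow (by positivity) hTnn]
  have hTpow : 0 < T ^ ((N : ℝ) / 2) := Real.rpow_pos_of_pos hTpos _
  rw [div_le_iff₀ hTpow]
  calc n ≤ 2 * (N0 * (R ^ N * ω)) := by linarith
    _ = 2 * ω * (2 * N / m) ^ ((N : ℝ) / 2) * N0 * T ^ ((N : ℝ) / 2) := by
        rw [hRN]; ring
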